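/- Let G be a monoid acting on a set X and let φ be a special filter on X with ⋂φ = {x_0}, witnessed by a special sequence with range X_0 = {x_α : α<κ}, and let τ_φ consist of all sets U⊆X such that for every g∈G with g•x_0∈U the preimage {x∈X : g•x∈U} belongs to φ. Then {F ∩ X_0 : F∈φ} = {U ∩ X_0 : U∈τ_φ, x_0∈U}. -/

import Mathlib

open Topology Cardinal

universe u

/-- An injective transfinite sequence `(x_α)_{α<κ}` of points of a `G`-act `X` is *special*
(with least index `i₀`) if there is an enumeration `G = {g_α}_{α<κ}` of the monoid `G` such
that for all `α < κ` and all `β, γ, δ < α`: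
(1) if `g_β • x_{i₀} ≠ g_γ • x_{i₀}` then `g_β • x_α ≠ g_γ • x_α`, and
(2) if `g_β • x_{i₀} ≠ g_γ • x_δ` then `g_β • x_α ≠ g_γ • x_δ`. -/
def IsSpecialSeq (G : Type u) {X : Type u} [Monoid G] [MulAction G X] (κ : Cardinal.{u})
    (x : κ.ord.ToType → X) (i₀ : κ.ord.ToType) : Prop :=
  (∀ i, i₀ ≤ i) ∧ Function.Injective x ∧
  ∃ g : κ.ord.ToType → G, Function.Surjective g ∧
    ∀ α β γ δ : κ.ord.ToType, β < α → γ < α → δ < α →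
      (g β • x i₀ ≠ g γ • x i₀ → g β • x α ≠ g γ • x α) ∧
      (g β • x i₀ ≠ g γ • x δ → g β • x α ≠ g γ • x δ)

/-- A filter `φ` on a `G`-act `X` is *special* (with `⋂ φ = {x₀}`) if for some cardinal `κ`
there is a special sequence `(x_α)_{α<κ}` in `X` with first term `x₀` such that
`⋂ φ = {x₀}` and `{x₀} ∪ {x_β : α < β < κ} ∈ φ` for all `α < κ`. -/
def IsSpecialFilter (G : Type u) {X : Type u} [Monoid G] [MulAction G X]
    (φ : Filter X) (x₀ : X) : Prop :=
  ∃ (κ : Cardinal.{u}) (x : κ.ord.ToType → X) (i₀ : κ.ord.ToType),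
    IsSpecialSeq G κ x i₀ ∧ x i₀ = x₀ ∧ ⋂₀ φ.sets = {x₀} ∧
    ∀ α : κ.ord.ToType, insert x₀ (x '' Set.Ioi α) ∈ φ

/-- The topology `τ_φ`. -/
def tauPhi (G X : Type*) [Monoid G] [MulAction G X] (x₀ : X) (φ : Filter X) :
    TopologicalSpace X where
  IsOpen U := ∀ g : G, g • x₀ ∈ U → {x : X | g • x ∈ U} ∈ φ
  isOpen_univ := fun _ _ => Filter.univ_mem' fun _ => trivial
  isOpen_inter := fun U V hU hV g hg =>
    Filter.inter_mem (hU g hg.1) (hV g hg.2)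
  isOpen_sUnion := fun S hS g hg => by
    obtain ⟨t, htS, hgt⟩ := hg
    exact Filter.mem_of_superset (hS t htS g hgt) fun x hx => ⟨t, htS, hx⟩

/-- Let `φ` be a special filter on a `G`-act `X` with `⋂ φ = {x₀}`, witnessed by a special
sequence with range `X₀ = {x_α : α < κ}`.  Then
`{F ∩ X₀ : F ∈ φ} = {U ∩ X₀ : U ∈ τ_φ, x₀ ∈ U}`. -/
theorem tauPhi_trace_eq_of_specialFilter {G X : Type u} [Monoid G] [MulAction G X]
    (φ : Filter X) (x₀ : X) (κ : Cardinal.{u}) (x : κ.ord.ToType → X) (i₀ : κ.ord.ToType)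
    (hx : IsSpecialSeq G κ x i₀) (hx₀ : x i₀ = x₀) (hφ : ⋂₀ φ.sets = {x₀})
    (hmem : ∀ α : κ.ord.ToType, insert x₀ (x '' Set.Ioi α) ∈ φ) :
    {s : Set X | ∃ F ∈ φ, s = F ∩ Set.range x} =
      {s : Set X | ∃ U : Set X, IsOpen[tauPhi G X x₀ φ] U ∧ x₀ ∈ U ∧ s = U ∩ Set.range x} := by
  obtain ⟨hi₀, hinj, g, hgsurj, hspec⟩ := hx
  have hx₀mem : ∀ F ∈ φ, x₀ ∈ F := by
    intro F hF
    have h : x₀ ∈ ⋂₀ φ.sets := by rw [hφ]; rfl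
    exact h F hF
  ext s
  simp only [Set.mem_setOf_eq]
  constructor
  · rintro ⟨F, hF, rfl⟩
    refine ⟨(F ∩ Set.range x) ∪ (Set.range x)ᶜ, ?_, ?_, ?_⟩
    · -- openness in tauPhi
      intro gg hgg
      obtain ⟨γ, rfl⟩ := hgsurj gg
      obtain ⟨e, he⟩ := hgsurj 1
      have key : ∀ α, max γ e < α → ∀ δ, g γ • x α = x δ →
          δ = α ∨ g γ • x₀ = x δ := by
        intro α hα δ heq
        have hγα : γ < α := (le_max_left γ e).trans_lt hα
        have heα : e < α := (le_max_right γ e).trans_lt hα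
        rcases lt_trichotomy δ α with hlt | heqδ | hgt
        · by_cases hc : g γ • x₀ = x δ
          · exact Or.inr hc
          · exfalso
            have h := (hspec α γ e δ hγα heα hlt).2
            rw [hx₀, he, one_smul] at h
            exact h hc heq
        · exact Or.inl heqδ
        · exfalso
          have h := (hspec δ e γ α (heα.trans hgt) (hγα.trans hgt) hgt).2
          rw [he, one_smul, one_smul, hx₀] at h
          have hne : x₀ ≠ g γ • x α := by
            rw [heq]
            intro hc
            have : i₀ = δ := hinj (hx₀.trans hc)
            exact absurd ((hi₀ α).trans_lt hgt) (this ▸ lt_irrefl δ)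
          exact h hne heq.symm
      refine Filter.mem_of_superset
        (Filter.inter_mem (hmem (max γ e)) hF) ?_
      rintro y ⟨hy1, hyF⟩
      rcases hy1 with rfl | ⟨α, hα, rfl⟩
      · exact hgg
      · simp only [Set.mem_setOf_eq]
        by_cases hr : g γ • x α ∈ Set.range x
        · obtain ⟨δ, hδ⟩ := hr
          rcases key α hα δ hδ.symm with rfl | hc
          · exact Or.inl ⟨by rwa [← hδ], hδ ▸ ⟨δ, rfl⟩⟩
          · rw [← hδ, ← hc]
            exact hgg
        · exact Or.inr hr
    · exact Or.inl ⟨hx₀mem F hF, ⟨i₀, hx₀⟩⟩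
    · ext y
      constructor
      · rintro ⟨hyF, hyR⟩
        exact ⟨Or.inl ⟨hyF, hyR⟩, hyR⟩
      · rintro ⟨hyU | hyU, hyR⟩
        · exact ⟨hyU.1, hyR⟩
        · exact absurd hyR hyU
  · rintro ⟨U, hU, hxU, rfl⟩
    refine ⟨U, ?_, rfl⟩
    have h := hU 1 (by rwa [one_smul])
    simpa only [one_smul, Set.setOf_mem_eq] using h
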